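/- Let S ⊆ {1,…,12} be such that MAIS(G*_S) < α(G*_{S,u}). Then for every finite alphabet A with |A| ≥ 2, every positive integer m, and every valid index code of length ℓ with locality 1 for the three-receiver unicast problem B*_S, the observation sets satisfy R_i ∩ R_j = ∅ for all 1 ≤ i < j ≤ 3. -/

import Mathlib

/-- The want sets `W₁, W₂, W₃` of the three receivers. -/
def Wset : Fin 3 → Finset ℕ
  | 0 => {1, 2, 3, 4}
  | 1 => {5, 6, 7, 8}
  | 2 => {9, 10, 11, 12}

/-- The side information sets `K₁, K₂, K₃` of the three receivers. -/
def Kset : Fin 3 → Finset ℕ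
  | 0 => {5, 6, 9, 10}
  | 1 => {1, 2, 9, 11}
  | 2 => {1, 3, 5, 7}

/-- Directed edge relation of the side information graph `G*` on `{1, …, 12}`:
`(a, b)` is an edge iff `a ∈ Wᵢ` and `b ∈ Kᵢ` for the (unique) `i` with `a ∈ Wᵢ`. -/
def Gedge (a b : ℕ) : Prop := ∃ i : Fin 3, a ∈ Wset i ∧ b ∈ Kset i

/-- The underlying undirected side information graph `G*ᵤ`: distinct `a, b` are adjacent iff
both `(a, b)` and `(b, a)` are directed edges of `G*`. -/
def Gu : SimpleGraph ℕ where
  Adj a b := a ≠ b ∧ Gedge a b ∧ Gedge b a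
  symm := by
    constructor
    intro a b h
    exact ⟨h.1.symm, h.2.2, h.2.1⟩
  loopless := by
    constructor
    intro a h
    exact h.1 rfl

instance : ∀ a b, Decidable (Gedge a b) := fun a b =>
  decidable_of_iff (∃ i : Fin 3, a ∈ Wset i ∧ b ∈ Kset i) Iff.rfl

instance : DecidableRel Gu.Adj := fun a b =>
  decidable_of_iff (a ≠ b ∧ Gedge a b ∧ Gedge b a) Iff.rfl

private def listA : List (ℕ × ℕ) := [(1,6),(2,6),(5,11),(7,11),(9,3),(10,3)]
private def listB : List (ℕ × ℕ) := [(1,10),(3,10),(5,2),(6,2),(9,7),(11,7)]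

private lemma inL : ∀ a ∈ Finset.Icc 1 12, ∀ b ∈ Finset.Icc 1 12,
    Gedge a b → ¬ Gedge b a → b ∈ ({1,2,3,5,6,7,9,10,11} : Finset ℕ) := by decide

private lemma outL : ∀ b ∈ Finset.Icc 1 12, ∀ c ∈ Finset.Icc 1 12,
    Gedge b c → ¬ Gedge c b → b ∈ ({2,3,4,6,7,8,10,11,12} : Finset ℕ) := by decide

private lemma coreL : ∀ b ∈ Finset.Icc 1 12, b ∈ ({1,2,3,5,6,7,9,10,11} : Finset ℕ) →
    b ∈ ({2,3,4,6,7,8,10,11,12} : Finset ℕ) → b ∈ ({2,3,6,7,10,11} : Finset ℕ) := by decide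

private lemma succL : ∀ b ∈ Finset.Icc 1 12, ∀ c ∈ Finset.Icc 1 12,
    b ∈ ({2,3,6,7,10,11} : Finset ℕ) → c ∈ ({2,3,6,7,10,11} : Finset ℕ) →
    Gedge b c → ¬ Gedge c b →
    (b, c) ∈ ([(2,10),(10,7),(7,2),(3,6),(6,11),(11,3)] : List (ℕ × ℕ)) := by decide

private lemma A1 : ∀ p ∈ listA, Gu.Adj p.1 p.2 := by decide
private lemma B1 : ∀ p ∈ listB, Gu.Adj p.1 p.2 := by decide
private lemma A4 : ∀ p ∈ listA, p.2 = 3 ∨ p.2 = 6 ∨ p.2 = 11 := by decide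
private lemma B4 : ∀ p ∈ listB, p.2 = 2 ∨ p.2 = 7 ∨ p.2 = 10 := by decide
private lemma A5 : ∀ p ∈ listA, p.1 ≠ p.2 := by decide
private lemma B5 : ∀ p ∈ listB, p.1 ≠ p.2 := by decide

private lemma A2 : ∀ p ∈ listA, ∀ q ∈ Finset.Icc 1 12,
    ¬ Gu.Adj q 3 → ¬ Gu.Adj q 6 → ¬ Gu.Adj q 11 → q ≠ p.2 → ¬ Gu.Adj p.1 q := by decide

private lemma B2 : ∀ p ∈ listB, ∀ q ∈ Finset.Icc 1 12,
    ¬ Gu.Adj q 2 → ¬ Gu.Adj q 7 → ¬ Gu.Adj q 10 → q ≠ p.2 → ¬ Gu.Adj p.1 q := by decide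

private lemma pickA : ∀ a ∈ Finset.Icc 1 12, ∀ b ∈ Finset.Icc 1 12, a ≠ b →
    Gedge a b → Gedge b a → ∃ p ∈ listA, p.1 = a ∨ p.1 = b := by decide

private lemma pickB : ∀ a ∈ Finset.Icc 1 12, ∀ b ∈ Finset.Icc 1 12, a ≠ b →
    Gedge a b → Gedge b a → ∃ p ∈ listB, p.1 = a ∨ p.1 = b := by decide

private lemma KW_not : ∀ i : Fin 3, ∀ a, a ∈ Kset i → a ∉ Wset i := by decide
private lemma W_not : ∀ i j : Fin 3, i ≠ j → ∀ a, a ∈ Wset i → a ∉ Wset j := by decide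

private lemma mem_Icc_of_Gedge {a b : ℕ} (h : Gedge a b) :
    a ∈ Finset.Icc 1 12 ∧ b ∈ Finset.Icc 1 12 := by
  obtain ⟨i, ha, hb⟩ := h
  fin_cases i <;> simp [Wset, Kset] at ha hb <;>
    simp [Finset.mem_Icc] <;> omega

/-- A directed cycle (of length `k + 2 ≥ 2`) with all its vertices in the finite set `S`,
in the directed graph with edge relation `E`: a sequence of distinct vertices
`v 0, v 1, …` with a directed edge from each vertex to the (cyclically) next one. -/
def HasDirCycleIn (E : ℕ → ℕ → Prop) (S : Finset ℕ) : Prop :=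
  ∃ k : ℕ, ∃ v : Fin (k + 2) → ℕ,
    Function.Injective v ∧ (∀ i, v i ∈ S) ∧ ∀ i, E (v i) (v (i + 1))

/-- `MAIS` of the subgraph induced by `S` of the directed graph with edge relation `E`:
the maximum cardinality of a subset `T ⊆ S` whose induced subgraph contains no directed
cycle. -/
noncomputable def maisOn (E : ℕ → ℕ → Prop) (S : Finset ℕ) : ℕ :=
  sSup {n : ℕ | ∃ T : Finset ℕ, T ⊆ S ∧ T.card = n ∧ ¬ HasDirCycleIn E T}

/-- The independence number of the subgraph of `G` induced by the finite vertex set `S`: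
the maximum cardinality of a set `T ⊆ S` of pairwise non-adjacent vertices. -/
noncomputable def alphaOn (G : SimpleGraph ℕ) (S : Finset ℕ) : ℕ :=
  sSup {n : ℕ | ∃ T : Finset ℕ, T ⊆ S ∧ T.card = n ∧ ∀ a ∈ T, ∀ b ∈ T, ¬ G.Adj a b}

private lemma indep_no_cycle (T : Finset ℕ) (hT : ∀ a ∈ T, a ∈ Finset.Icc 1 12)
    (hind : ∀ a ∈ T, ∀ b ∈ T, ¬ Gu.Adj a b)
    (h1 : ¬ (3 ∈ T ∧ 6 ∈ T ∧ 11 ∈ T)) (h2 : ¬ (2 ∈ T ∧ 7 ∈ T ∧ 10 ∈ T)) :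
    ¬ HasDirCycleIn Gedge T := by
  rintro ⟨k, v, hinj, hmem, hedge⟩
  have hIcc : ∀ i, v i ∈ Finset.Icc 1 12 := fun i => hT _ (hmem i)
  have hne : ∀ i : Fin (k + 2), v i ≠ v (i + 1) := by
    intro i h
    have h' := left_eq_add.mp (hinj h)
    rw [Fin.one_eq_zero_iff] at h'
    omega
  have hD : ∀ i, Gedge (v i) (v (i + 1)) ∧ ¬ Gedge (v (i + 1)) (v i) := by
    intro i
    exact ⟨hedge i, fun hrev => hind _ (hmem i) _ (hmem (i + 1)) ⟨hne i, hedge i, hrev⟩⟩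
  have hcore : ∀ i, v i ∈ ({2,3,6,7,10,11} : Finset ℕ) := by
    intro i
    have e : i - 1 + 1 = i := sub_add_cancel i 1
    have hin := hD (i - 1)
    rw [e] at hin
    exact coreL _ (hIcc i) (inL _ (hIcc (i - 1)) _ (hIcc i) hin.1 hin.2)
      (outL _ (hIcc i) _ (hIcc (i + 1)) (hD i).1 (hD i).2)
  have hsucc : ∀ i : Fin (k + 2),
      (v i, v (i + 1)) ∈ ([(2,10),(10,7),(7,2),(3,6),(6,11),(11,3)] : List (ℕ × ℕ)) :=
    fun i => succL _ (hIcc i) _ (hIcc (i + 1)) (hcore i) (hcore (i + 1)) (hD i).1 (hD i).2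
  have m0 := hmem 0
  have m1 := hmem (0 + 1)
  have m2 := hmem (0 + 1 + 1)
  have s0 := hsucc 0
  have s1 := hsucc (0 + 1)
  simp only [List.mem_cons, List.not_mem_nil, or_false, Prod.mk.injEq] at s0 s1
  rcases s0 with ⟨e0, e1⟩ | ⟨e0, e1⟩ | ⟨e0, e1⟩ | ⟨e0, e1⟩ | ⟨e0, e1⟩ | ⟨e0, e1⟩ <;>
    rcases s1 with ⟨f0, f1⟩ | ⟨f0, f1⟩ | ⟨f0, f1⟩ | ⟨f0, f1⟩ | ⟨f0, f1⟩ | ⟨f0, f1⟩ <;>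
      rw [e1] at f0 <;>
      first
        | omega
        | exact h1 ⟨e0 ▸ m0, e1 ▸ m1, f1 ▸ m2⟩
        | exact h1 ⟨f1 ▸ m2, e0 ▸ m0, e1 ▸ m1⟩
        | exact h1 ⟨e1 ▸ m1, f1 ▸ m2, e0 ▸ m0⟩
        | exact h2 ⟨e0 ▸ m0, f1 ▸ m2, e1 ▸ m1⟩
        | exact h2 ⟨f1 ▸ m2, e1 ▸ m1, e0 ▸ m0⟩
        | exact h2 ⟨e1 ▸ m1, e0 ▸ m0, f1 ▸ m2⟩

private lemma alpha_le_mais (S : Finset ℕ) (hS : S ⊆ Finset.Icc 1 12) {a b : ℕ}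
    (ha : a ∈ S) (hb : b ∈ S) (hadj : Gu.Adj a b) :
    alphaOn Gu S ≤ maisOn Gedge S := by
  obtain ⟨hne, hab, hba⟩ := hadj
  apply csSup_le_csSup
  · refine ⟨12, ?_⟩
    rintro n ⟨T, hTS, rfl, -⟩
    calc T.card ≤ (Finset.Icc 1 12).card := Finset.card_le_card (hTS.trans hS)
    _ = 12 := by simp
  · exact ⟨0, ∅, Finset.empty_subset _, Finset.card_empty, by simp⟩
  · rintro n ⟨T, hTS, hcard, hind⟩
    have hTicc : ∀ q ∈ T, q ∈ Finset.Icc 1 12 := fun q hq => hS (hTS hq)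
    have hIa := (mem_Icc_of_Gedge hab).1
    have hIb := (mem_Icc_of_Gedge hba).1
    by_cases h1 : 3 ∈ T ∧ 6 ∈ T ∧ 11 ∈ T
    · obtain ⟨h3, h6, h11⟩ := h1
      obtain ⟨p, hp, hpc⟩ := pickA a hIa b hIb hne hab hba
      have hcS : p.1 ∈ S := by rcases hpc with h | h <;> exact h ▸ ‹_›
      have hadjcx : Gu.Adj p.1 p.2 := A1 p hp
      have hxT : p.2 ∈ T := by rcases A4 p hp with h | h | h <;> exact h ▸ ‹_›
      have hcT : p.1 ∉ T := fun hc => hind _ hc _ hxT hadjcx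
      have hkey : ∀ q ∈ T, q ≠ p.2 → ¬ Gu.Adj p.1 q := fun q hq hqx =>
        A2 p hp q (hTicc q hq) (hind q hq 3 h3) (hind q hq 6 h6) (hind q hq 11 h11) hqx
      refine ⟨insert p.1 (T.erase p.2), ?_, ?_, indep_no_cycle _ ?_ ?_ ?_ ?_⟩
      · intro t ht
        rcases Finset.mem_insert.mp ht with rfl | ht'
        · exact hcS
        · exact hTS (Finset.mem_of_mem_erase ht')
      · rw [Finset.card_insert_of_notMem (fun hc => hcT (Finset.mem_of_mem_erase hc)),
          Finset.card_erase_of_mem hxT, ← hcard]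
        have := Finset.card_pos.mpr ⟨p.2, hxT⟩
        omega
      · intro t ht
        rcases Finset.mem_insert.mp ht with rfl | ht'
        · exact hS hcS
        · exact hTicc _ (Finset.mem_of_mem_erase ht')
      · intro u hu w hw
        rcases Finset.mem_insert.mp hu with rfl | hu' <;>
          rcases Finset.mem_insert.mp hw with rfl | hw'
        · exact Gu.loopless.irrefl _
        · exact hkey w (Finset.mem_of_mem_erase hw') (Finset.ne_of_mem_erase hw')
        · exact fun hadj' =>
            hkey u (Finset.mem_of_mem_erase hu') (Finset.ne_of_mem_erase hu') hadj'.symm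
        · exact hind u (Finset.mem_of_mem_erase hu') w (Finset.mem_of_mem_erase hw')
      · rintro ⟨e3, e6, e11⟩
        rcases A4 p hp with h | h | h
        · rcases Finset.mem_insert.mp e3 with hh | hh
          · exact A5 p hp (hh.symm.trans h.symm)
          · exact absurd h.symm (Finset.ne_of_mem_erase hh)
        · rcases Finset.mem_insert.mp e6 with hh | hh
          · exact A5 p hp (hh.symm.trans h.symm)
          · exact absurd h.symm (Finset.ne_of_mem_erase hh)
        · rcases Finset.mem_insert.mp e11 with hh | hh
          · exact A5 p hp (hh.symm.trans h.symm)
          · exact absurd h.symm (Finset.ne_of_mem_erase hh)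
      · rintro ⟨e2, e7, e10⟩
        have n2 : (2 : ℕ) ∉ T := fun h => hind 2 h 6 h6 (by decide)
        have n7 : (7 : ℕ) ∉ T := fun h => hind 7 h 11 h11 (by decide)
        rcases Finset.mem_insert.mp e2 with h2c | h2t
        · rcases Finset.mem_insert.mp e7 with h7c | h7t
          · omega
          · exact n7 (Finset.mem_of_mem_erase h7t)
        · exact n2 (Finset.mem_of_mem_erase h2t)
    · by_cases h2 : 2 ∈ T ∧ 7 ∈ T ∧ 10 ∈ T
      · obtain ⟨h2', h7, h10⟩ := h2
        obtain ⟨p, hp, hpc⟩ := pickB a hIa b hIb hne hab hba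
        have hcS : p.1 ∈ S := by rcases hpc with h | h <;> exact h ▸ ‹_›
        have hadjcx : Gu.Adj p.1 p.2 := B1 p hp
        have hxT : p.2 ∈ T := by rcases B4 p hp with h | h | h <;> exact h ▸ ‹_›
        have hcT : p.1 ∉ T := fun hc => hind _ hc _ hxT hadjcx
        have hkey : ∀ q ∈ T, q ≠ p.2 → ¬ Gu.Adj p.1 q := fun q hq hqx =>
          B2 p hp q (hTicc q hq) (hind q hq 2 h2') (hind q hq 7 h7) (hind q hq 10 h10) hqx
        refine ⟨insert p.1 (T.erase p.2), ?_, ?_, indep_no_cycle _ ?_ ?_ ?_ ?_⟩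
        · intro t ht
          rcases Finset.mem_insert.mp ht with rfl | ht'
          · exact hcS
          · exact hTS (Finset.mem_of_mem_erase ht')
        · rw [Finset.card_insert_of_notMem (fun hc => hcT (Finset.mem_of_mem_erase hc)),
            Finset.card_erase_of_mem hxT, ← hcard]
          have := Finset.card_pos.mpr ⟨p.2, hxT⟩
          omega
        · intro t ht
          rcases Finset.mem_insert.mp ht with rfl | ht'
          · exact hS hcS
          · exact hTicc _ (Finset.mem_of_mem_erase ht')
        · intro u hu w hw
          rcases Finset.mem_insert.mp hu with rfl | hu' <;>
            rcases Finset.mem_insert.mp hw with rfl | hw'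
          · exact Gu.loopless.irrefl _
          · exact hkey w (Finset.mem_of_mem_erase hw') (Finset.ne_of_mem_erase hw')
          · exact fun hadj' =>
              hkey u (Finset.mem_of_mem_erase hu') (Finset.ne_of_mem_erase hu') hadj'.symm
          · exact hind u (Finset.mem_of_mem_erase hu') w (Finset.mem_of_mem_erase hw')
        · rintro ⟨e3, e6, e11⟩
          have n3 : (3 : ℕ) ∉ T := fun h => hind 3 h 10 h10 (by decide)
          have n6 : (6 : ℕ) ∉ T := fun h => hind 6 h 2 h2' (by decide)
          rcases Finset.mem_insert.mp e3 with h3c | h3t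
          · rcases Finset.mem_insert.mp e6 with h6c | h6t
            · omega
            · exact n6 (Finset.mem_of_mem_erase h6t)
          · exact n3 (Finset.mem_of_mem_erase h3t)
        · rintro ⟨e2, e7, e10⟩
          rcases B4 p hp with h | h | h
          · rcases Finset.mem_insert.mp e2 with hh | hh
            · exact B5 p hp (hh.symm.trans h.symm)
            · exact absurd h.symm (Finset.ne_of_mem_erase hh)
          · rcases Finset.mem_insert.mp e7 with hh | hh
            · exact B5 p hp (hh.symm.trans h.symm)
            · exact absurd h.symm (Finset.ne_of_mem_erase hh)
          · rcases Finset.mem_insert.mp e10 with hh | hh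
            · exact B5 p hp (hh.symm.trans h.symm)
            · exact absurd h.symm (Finset.ne_of_mem_erase hh)
      · exact ⟨T, hTS, hcard, indep_no_cycle T hTicc hind h1 h2⟩

/-- A valid index code of length `ℓ` with locality `1` and message length `m`, over the
alphabet `A`, for the three-receiver unicast problem `B*_S` determined by the message subset
`S ⊆ {1, …, 12}`.  The messages are `x j ∈ A ^ m` for `j ∈ S`.  It consists of an encoder
`enc`, and for each receiver `i ∈ {1, 2, 3}` a set `R i` of at most `m * |Wᵢ ∩ S|` codeword
coordinates together with a decoder `dec i` which recovers the demanded messages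
`(x j : j ∈ Wᵢ ∩ S)` from the observed codeword symbols `(enc x k : k ∈ R i)` and the side
information `(x j : j ∈ Kᵢ ∩ S)`. -/
structure ValidIndexCode (A : Type*) [Fintype A] (m ℓ : ℕ) (S : Finset ℕ) where
  enc : ({j : ℕ // j ∈ S} → Fin m → A) → Fin ℓ → A
  R : Fin 3 → Finset (Fin ℓ)
  locality : ∀ i : Fin 3, (R i).card ≤ m * (Wset i ∩ S).card
  dec : ∀ i : Fin 3, ({k : Fin ℓ // k ∈ R i} → A) →
    ({j : ℕ // j ∈ Kset i ∩ S} → Fin m → A) → ({j : ℕ // j ∈ Wset i ∩ S} → Fin m → A)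
  correct : ∀ (x : {j : ℕ // j ∈ S} → Fin m → A) (i : Fin 3)
      (j : {j : ℕ // j ∈ Wset i ∩ S}),
    dec i (fun k => enc x k.1) (fun j' => x ⟨j'.1, (Finset.mem_inter.mp j'.2).2⟩) j =
      x ⟨j.1, (Finset.mem_inter.mp j.2).2⟩

private def Xfun {A : Type*} (a₀ : A) (m : ℕ) (S : Finset ℕ) (i j : Fin 3)
    (u : {t : ℕ // t ∈ Wset i ∩ S} → Fin m → A)
    (v : {t : ℕ // t ∈ Wset j ∩ S} → Fin m → A) :
    {t : ℕ // t ∈ S} → Fin m → A :=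
  fun t => if h : t.1 ∈ Wset i ∩ S then u ⟨t.1, h⟩
    else if h' : t.1 ∈ Wset j ∩ S then v ⟨t.1, h'⟩ else fun _ => a₀

private lemma disjoint_of_oneside {A : Type*} [Fintype A] (hA : 2 ≤ Fintype.card A)
    {m ℓ : ℕ} {S : Finset ℕ} (code : ValidIndexCode A m ℓ S)
    (i j : Fin 3) (hij : i ≠ j)
    (hK : ∀ a, a ∈ Kset j → a ∈ Wset i → a ∉ S) :
    code.R i ∩ code.R j = ∅ := by
  classical
  obtain ⟨a₀⟩ : Nonempty A := Fintype.card_pos_iff.mp (by omega)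
  let Φ : (({t : ℕ // t ∈ Wset i ∩ S} → Fin m → A) ×
      ({t : ℕ // t ∈ Wset j ∩ S} → Fin m → A)) →
      ({k : Fin ℓ // k ∈ code.R i ∪ code.R j} → A) :=
    fun p k => code.enc (Xfun a₀ m S i j p.1 p.2) k.1
  have hΦ : Function.Injective Φ := by
    rintro ⟨u, v⟩ ⟨u', v'⟩ heq
    have hobsj : (fun k : {k : Fin ℓ // k ∈ code.R j} =>
          code.enc (Xfun a₀ m S i j u v) k.1)
        = (fun k => code.enc (Xfun a₀ m S i j u' v') k.1) :=
      funext fun k => congrFun heq ⟨k.1, Finset.mem_union_right _ k.2⟩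
    have hobsi : (fun k : {k : Fin ℓ // k ∈ code.R i} =>
          code.enc (Xfun a₀ m S i j u v) k.1)
        = (fun k => code.enc (Xfun a₀ m S i j u' v') k.1) :=
      funext fun k => congrFun heq ⟨k.1, Finset.mem_union_left _ k.2⟩
    have hsij : ∀ (u₁ : {t : ℕ // t ∈ Wset i ∩ S} → Fin m → A)
        (v₁ : {t : ℕ // t ∈ Wset j ∩ S} → Fin m → A),
        (fun t : {t : ℕ // t ∈ Kset j ∩ S} =>
          Xfun a₀ m S i j u₁ v₁ ⟨t.1, (Finset.mem_inter.mp t.2).2⟩)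
        = (fun _ _ => a₀) := by
      intro u₁ v₁
      funext t
      obtain ⟨hKm, hSm⟩ := Finset.mem_inter.mp t.2
      have h1 : t.1 ∉ Wset i ∩ S := fun hh => hK t.1 hKm (Finset.mem_inter.mp hh).1 hSm
      have h2 : t.1 ∉ Wset j ∩ S := fun hh => KW_not j t.1 hKm (Finset.mem_inter.mp hh).1
      simp only [Xfun, h1, h2, dif_neg, not_false_iff]
    have hv : v = v' := by
      funext t
      have h3 : t.1 ∉ Wset i ∩ S := fun hh =>
        W_not i j hij t.1 (Finset.mem_inter.mp hh).1 (Finset.mem_inter.mp t.2).1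
      have e1 := code.correct (Xfun a₀ m S i j u v) j t
      have e2 := code.correct (Xfun a₀ m S i j u' v') j t
      rw [hsij u v, hobsj] at e1
      rw [hsij u' v'] at e2
      have e3 : Xfun a₀ m S i j u v ⟨t.1, (Finset.mem_inter.mp t.2).2⟩
          = Xfun a₀ m S i j u' v' ⟨t.1, (Finset.mem_inter.mp t.2).2⟩ := by
        rw [← e1, ← e2]
      simpa only [Xfun, h3, dif_neg, not_false_iff, t.2, dif_pos] using e3
    have hsii : (fun t : {t : ℕ // t ∈ Kset i ∩ S} =>
          Xfun a₀ m S i j u v ⟨t.1, (Finset.mem_inter.mp t.2).2⟩)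
        = (fun t => Xfun a₀ m S i j u' v' ⟨t.1, (Finset.mem_inter.mp t.2).2⟩) := by
      funext t
      have h1 : t.1 ∉ Wset i ∩ S := fun hh =>
        KW_not i t.1 (Finset.mem_inter.mp t.2).1 (Finset.mem_inter.mp hh).1
      by_cases h2 : t.1 ∈ Wset j ∩ S
      · simp only [Xfun, h1, dif_neg, not_false_iff, h2, dif_pos, hv]
      · simp only [Xfun, h1, h2, dif_neg, not_false_iff]
    have hu : u = u' := by
      funext t
      have e1 := code.correct (Xfun a₀ m S i j u v) i t
      have e2 := code.correct (Xfun a₀ m S i j u' v') i t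
      rw [hsii, hobsi] at e1
      have e3 : Xfun a₀ m S i j u v ⟨t.1, (Finset.mem_inter.mp t.2).2⟩
          = Xfun a₀ m S i j u' v' ⟨t.1, (Finset.mem_inter.mp t.2).2⟩ := by
        rw [← e1, ← e2]
      simpa only [Xfun, t.2, dif_pos] using e3
    rw [Prod.mk.injEq]
    exact ⟨hu, hv⟩
  have hcard := Fintype.card_le_of_injective Φ hΦ
  have hc1 : Fintype.card (({t : ℕ // t ∈ Wset i ∩ S} → Fin m → A) ×
      ({t : ℕ // t ∈ Wset j ∩ S} → Fin m → A))
      = Fintype.card A ^ (m * (Wset i ∩ S).card + m * (Wset j ∩ S).card) := by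
    simp only [Fintype.card_prod, Fintype.card_fun, Fintype.card_coe, Fintype.card_fin,
      ← pow_mul, ← pow_add]
  have hc2 : Fintype.card ({k : Fin ℓ // k ∈ code.R i ∪ code.R j} → A)
      = Fintype.card A ^ (code.R i ∪ code.R j).card := by
    rw [Fintype.card_fun, Fintype.card_coe]
  rw [hc1, hc2] at hcard
  have hle := (Nat.pow_le_pow_iff_right (by omega : 1 < Fintype.card A)).mp hcard
  have huni := Finset.card_union_add_card_inter (code.R i) (code.R j)
  have hli := code.locality i
  have hlj := code.locality j
  have : (code.R i ∩ code.R j).card = 0 := by omega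
  exact Finset.card_eq_zero.mp this

/-- If `MAIS(G*_S) < α(G*_{S,u})`, then for every alphabet of size at least `2` and every
valid index code with locality `1` for `B*_S`, the observation sets of distinct receivers are
disjoint. -/
theorem observation_sets_disjoint (S : Finset ℕ) (hS : S ⊆ Finset.Icc 1 12)
    (h : maisOn Gedge S < alphaOn Gu S)
    (A : Type*) [Fintype A] (hA : 2 ≤ Fintype.card A)
    (m : ℕ) (hm : 0 < m) (ℓ : ℕ) (code : ValidIndexCode A m ℓ S) :
    ∀ i j : Fin 3, i < j → code.R i ∩ code.R j = ∅ := by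
  intro i j hij
  have noEdge : ∀ a ∈ S, ∀ b ∈ S, ¬ Gu.Adj a b := by
    intro a ha b hb hadj
    exact absurd (alpha_le_mais S hS ha hb hadj) (not_le.mpr h)
  have key : (∀ a, a ∈ Kset j → a ∈ Wset i → a ∉ S) ∨
      (∀ a, a ∈ Kset i → a ∈ Wset j → a ∉ S) := by
    by_contra hc
    push_neg at hc
    obtain ⟨⟨a, haK, haW, haS⟩, ⟨b, hbK, hbW, hbS⟩⟩ := hc
    have hne : a ≠ b := fun he => W_not i j hij.ne a haW (he ▸ hbW)
    exact noEdge a haS b hbS ⟨hne, ⟨i, haW, hbK⟩, ⟨j, hbW, haK⟩⟩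
  rcases key with hk | hk
  · exact disjoint_of_oneside hA code i j hij.ne hk
  · rw [Finset.inter_comm]
    exact disjoint_of_oneside hA code j i hij.ne' hk
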